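/- Let n and k be positive integers with k | n. The number of orbits d_{n,k} of the group D^k_n = {ρ^i_n, τ_n∘ρ^i_n : i = k, 2k, …, n} acting on {0,1}^n equals g_{n,k}/2 + l, where g_{n,k} = (k/n) · Σ_{t | (n/k)} φ(t) · 2^{n/t}, and l = 2^{(n/2)−1} if n is even and k is even; l = (3/4)·2^{n/2} if n is even and k is odd; and l = 2^{(n−1)/2} if n is odd. -/

import Mathlib

/-- Left `i`-cyclic shift: `(bvRot n i x) j = x ((j + i) mod n)`. -/
def bvRot (n i : ℕ) (x : Fin n → Bool) : Fin n → Bool :=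
  fun j => x ⟨(j.val + i) % n, Nat.mod_lt _ (Nat.zero_lt_of_lt j.isLt)⟩

/-- Reflection operator: `(bvRefl n x) j = x (n - 1 - j)`. -/
def bvRefl (n : ℕ) (x : Fin n → Bool) : Fin n → Bool :=
  fun j => x ⟨n - 1 - j.val, by have := j.isLt; omega⟩

/-- Coordinatewise XOR of binary vectors. -/
def bvXor {n : ℕ} (x y : Fin n → Bool) : Fin n → Bool := fun i => xor (x i) (y i)

/-- Inner product over GF(2). -/
def bIP {n : ℕ} (x w : Fin n → Bool) : Bool :=
  (Finset.univ.filter (fun i => x i && w i)).card % 2 == 1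

/-- Hamming distance between Boolean functions. -/
def hDist {n : ℕ} (f g : (Fin n → Bool) → Bool) : ℕ :=
  (Finset.univ.filter fun x => f x ≠ g x).card

/-- The affine Boolean function `x ↦ c ⊕ ⟨x, w⟩`. -/
def bAffine {n : ℕ} (c : Bool) (w : Fin n → Bool) : (Fin n → Bool) → Bool :=
  fun x => xor c (bIP x w)

/-- Nonlinearity: minimum Hamming distance to an affine function. -/
def nl {n : ℕ} (f : (Fin n → Bool) → Bool) : ℕ :=
  Finset.univ.inf' Finset.univ_nonempty
    (fun p : Bool × (Fin n → Bool) => hDist f (bAffine p.1 p.2))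

def sgn (b : Bool) : ℤ := if b then -1 else 1

/-- Walsh transform. -/
def walsh {n : ℕ} (f : (Fin n → Bool) → Bool) (w : Fin n → Bool) : ℤ :=
  ∑ x : Fin n → Bool, sgn (f x) * sgn (bIP x w)

/-- Autocorrelation function. -/
def autocorr {n : ℕ} (f : (Fin n → Bool) → Bool) (d : Fin n → Bool) : ℤ :=
  ∑ x : Fin n → Bool, sgn (f x) * sgn (f (bvXor x d))

/-- Absolute indicator: maximum of `|autocorr f d|` over `d ≠ 0`. -/
def absInd {n : ℕ} (f : (Fin n → Bool) → Bool) : ℕ :=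
  (Finset.univ.filter (fun d : Fin n → Bool => d ≠ fun _ => false)).sup
    (fun d => (autocorr f d).natAbs)

/-- ANF coefficient of the monomial `∏_{i ∈ S} x_i`. -/
def anfCoeff {n : ℕ} (f : (Fin n → Bool) → Bool) (S : Finset (Fin n)) : Bool :=
  (Finset.univ.filter
    (fun x : Fin n → Bool => (∀ i, x i = true → i ∈ S) ∧ f x = true)).card % 2 == 1

/-- Algebraic degree of a Boolean function. -/
def algDeg {n : ℕ} (f : (Fin n → Bool) → Bool) : ℕ :=
  (Finset.univ.filter (fun S : Finset (Fin n) => anfCoeff f S = true)).sup Finset.card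

/-- Orbit of `x` under the cyclic shift group. -/
def cycOrbit (n : ℕ) (x : Fin n → Bool) : Finset (Fin n → Bool) :=
  Finset.univ.image fun i : Fin n => bvRot n i x

/-- Orbit of `x` under the group generated by the `k`-cyclic shift. -/
def kCycOrbit (n k : ℕ) (x : Fin n → Bool) : Finset (Fin n → Bool) :=
  Finset.univ.image fun i : Fin (n / k) => bvRot n (k * i) x

/-- Orbit of `x` under the dihedral group. -/
def dihOrbit (n : ℕ) (x : Fin n → Bool) : Finset (Fin n → Bool) :=
  (Finset.univ.image fun i : Fin n => bvRot n i x) ∪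
  (Finset.univ.image fun i : Fin n => bvRefl n (bvRot n i x))

/-- Orbit of `x` under the group `D^k_n = {ρ^{ik}, τ ∘ ρ^{ik}}`. -/
def kDihOrbit (n k : ℕ) (x : Fin n → Bool) : Finset (Fin n → Bool) :=
  (Finset.univ.image fun i : Fin (n / k) => bvRot n (k * i) x) ∪
  (Finset.univ.image fun i : Fin (n / k) => bvRefl n (bvRot n (k * i) x))


lemma bvRot_bvRot (n i j : ℕ) (x : Fin n → Bool) :
    bvRot n i (bvRot n j x) = bvRot n (i + j) x := by
  funext a
  simp only [bvRot]
  congr 1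
  apply Fin.ext
  show ((a.val + i) % n + j) % n = (a.val + (i + j)) % n
  conv_rhs => rw [← Nat.add_assoc]
  exact Nat.ModEq.add_right j (Nat.mod_modEq _ n)

lemma bvRot_congr {n i j : ℕ} (h : i ≡ j [MOD n]) (x : Fin n → Bool) :
    bvRot n i x = bvRot n j x := by
  funext a
  simp only [bvRot]
  congr 1
  exact Fin.ext (Nat.ModEq.add_left a.val h)

lemma bvRot_zero (n : ℕ) (x : Fin n → Bool) : bvRot n 0 x = x := by
  funext a
  simp only [bvRot]
  congr 1
  exact Fin.ext (by simp [Nat.mod_eq_of_lt a.isLt])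

lemma bvRot_of_dvd {n i : ℕ} (h : n ∣ i) (x : Fin n → Bool) : bvRot n i x = x := by
  rw [bvRot_congr ((Nat.modEq_zero_iff_dvd).2 h), bvRot_zero]

lemma bvRefl_bvRefl (n : ℕ) (x : Fin n → Bool) : bvRefl n (bvRefl n x) = x := by
  funext a
  simp only [bvRefl]
  congr 1
  apply Fin.ext
  show n - 1 - (n - 1 - a.val) = a.val
  have := a.isLt; omega

lemma bvRot_bvRefl_bvRot (n t j : ℕ) (x : Fin n → Bool) :
    bvRot n t (bvRefl n (bvRot n (j + t) x)) = bvRefl n (bvRot n j x) := by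
  funext a
  simp only [bvRot, bvRefl]
  congr 1
  apply Fin.ext
  show (n - 1 - (a.val + t) % n + (j + t)) % n = (n - 1 - a.val + j) % n
  have hn : 0 < n := Nat.zero_lt_of_lt a.isLt
  obtain ⟨q, hq⟩ : ∃ q, a.val + t = q * n + (a.val + t) % n :=
    ⟨(a.val + t) / n, (Nat.div_add_mod' _ _).symm⟩
  have hb : (a.val + t) % n < n := Nat.mod_lt _ hn
  have ha := a.isLt
  have key : n - 1 - (a.val + t) % n + (j + t)
      = (n - 1 - a.val + j) + q * n := by omega
  rw [key, Nat.add_mul_mod_self_right]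

/-- Type synonym carrying the `D^k_n` action. -/
abbrev BVkm (k m : ℕ) := Fin (k * m) → Bool

instance BVkm.fintype (k m : ℕ) : Fintype (BVkm k m) :=
  inferInstanceAs (Fintype (Fin (k * m) → Bool))

instance BVkm.decEq (k m : ℕ) : DecidableEq (BVkm k m) :=
  inferInstanceAs (DecidableEq (Fin (k * m) → Bool))

open DihedralGroup in
instance BVkm.smul (k m : ℕ) : SMul (DihedralGroup m) (BVkm k m) :=
  ⟨fun g x => match g with
    | .r i => bvRot (k * m) (k * i.val) x
    | .sr i => bvRefl (k * m) (bvRot (k * m) (k * i.val) x)⟩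

lemma BVkm.r_smul (k m : ℕ) (i : ZMod m) (x : BVkm k m) :
    (DihedralGroup.r i) • x = bvRot (k * m) (k * i.val) x := rfl

lemma BVkm.sr_smul (k m : ℕ) (i : ZMod m) (x : BVkm k m) :
    (DihedralGroup.sr i) • x = bvRefl (k * m) (bvRot (k * m) (k * i.val) x) := rfl

lemma zmod_val_congr {m : ℕ} [NeZero m] (k : ℕ) (i j : ZMod m) :
    k * (i + j).val ≡ k * i.val + k * j.val [MOD k * m] := by
  have h : (i + j).val ≡ i.val + j.val [MOD m] := by
    rw [ZMod.val_add]; exact Nat.mod_modEq _ m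
  have h2 := Nat.ModEq.mul_left' (c := k) h
  rwa [Nat.mul_add] at h2

instance BVkm.mulAction (k m : ℕ) [NeZero m] : MulAction (DihedralGroup m) (BVkm k m) where
  one_smul x := by
    show bvRot (k * m) (k * (0 : ZMod m).val) x = x
    rw [ZMod.val_zero, Nat.mul_zero, bvRot_zero]
  mul_smul g h x := by
    rcases g with i | i <;> rcases h with j | j
    · show bvRot (k*m) (k * (i + j).val) x = bvRot (k*m) (k * i.val) (bvRot (k*m) (k * j.val) x)
      rw [bvRot_bvRot, bvRot_congr (x := x) (zmod_val_congr k i j)]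
    · show bvRefl (k*m) (bvRot (k*m) (k * (j - i).val) x)
        = bvRot (k*m) (k * i.val) (bvRefl (k*m) (bvRot (k*m) (k * j.val) x))
      have h1 : k * j.val ≡ k * (j - i).val + k * i.val [MOD k * m] := by
        have := zmod_val_congr k (j - i) i
        rwa [sub_add_cancel] at this
      rw [bvRot_congr (x := x) h1, bvRot_bvRefl_bvRot]
    · show bvRefl (k*m) (bvRot (k*m) (k * (i + j).val) x)
        = bvRefl (k*m) (bvRot (k*m) (k * i.val) (bvRot (k*m) (k * j.val) x))
      rw [bvRot_bvRot, bvRot_congr (x := x) (zmod_val_congr k i j)]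
    · show bvRot (k*m) (k * (j - i).val) x
        = bvRefl (k*m) (bvRot (k*m) (k * i.val) (bvRefl (k*m) (bvRot (k*m) (k * j.val) x)))
      have h1 : k * j.val ≡ k * (j - i).val + k * i.val [MOD k * m] := by
        have := zmod_val_congr k (j - i) i
        rwa [sub_add_cancel] at this
      rw [bvRot_congr (x := x) h1, bvRot_bvRefl_bvRot, bvRefl_bvRefl]

instance orbitRelDecidable (k m : ℕ) [NeZero m] :
    DecidableRel (MulAction.orbitRel (DihedralGroup m) (BVkm k m)).r :=
  fun x y => decidable_of_iff (∃ g : DihedralGroup m, g • y = x) MulAction.mem_orbit_iff.symm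

instance orbitQuotFintype (k m : ℕ) [NeZero m] :
    Fintype (Quotient (MulAction.orbitRel (DihedralGroup m) (BVkm k m))) :=
  @Quotient.fintype (BVkm k m) _ (MulAction.orbitRel (DihedralGroup m) (BVkm k m))
    (orbitRelDecidable k m)

section RotFix

lemma rot_fix_index_bound {N j : ℕ} (hN : 0 < N) (v : ℕ) :
    v % Nat.gcd N j < N :=
  lt_of_lt_of_le (Nat.mod_lt _ (Nat.gcd_pos_of_pos_left _ hN))
    (Nat.le_of_dvd hN (Nat.gcd_dvd_left N j))

lemma exists_mul_modEq_gcd (N j : ℕ) (hN : 0 < N) :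
    ∃ t : ℕ, t * j ≡ Nat.gcd N j [MOD N] := by
  set g := Nat.gcd N j with hgdef
  have hg : 0 < g := Nat.gcd_pos_of_pos_left _ hN
  set N' := N / g with hN'def
  set j' := j / g with hj'def
  have hNg : N = g * N' := (Nat.mul_div_cancel' (Nat.gcd_dvd_left N j)).symm
  have hjg : j = g * j' := (Nat.mul_div_cancel' (Nat.gcd_dvd_right N j)).symm
  have hN' : 0 < N' := by
    rcases Nat.eq_zero_or_pos N' with h | h
    · rw [h, Nat.mul_zero] at hNg; omega
    · exact h
  have hco : Nat.Coprime j' N' := (Nat.coprime_div_gcd_div_gcd hg).symm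
  have hpow : j' ^ N'.totient ≡ 1 [MOD N'] := Nat.ModEq.pow_totient hco
  have htot : 0 < N'.totient := Nat.totient_pos.2 hN'
  refine ⟨j' ^ (N'.totient - 1), ?_⟩
  have h1 : j' ^ (N'.totient - 1) * j' = j' ^ N'.totient := by
    rw [← Nat.pow_succ]
    congr 1
    omega
  have hpow' : j' ^ (N'.totient - 1) * j' ≡ 1 [MOD N'] := by rw [h1]; exact hpow
  have h2 : g * (j' ^ (N'.totient - 1) * j') ≡ g * 1 [MOD g * N'] :=
    Nat.ModEq.mul_left' g hpow' 
  calc j' ^ (N'.totient - 1) * j = g * (j' ^ (N'.totient - 1) * j') := by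
        rw [hjg]; ring
    _ ≡ g * 1 [MOD N] := by rw [hNg]; exact h2
    _ = g := by rw [Nat.mul_one]

lemma rot_fixed_iff {N : ℕ} (j : ℕ) (hN : 0 < N) (x : Fin N → Bool) :
    bvRot N j x = x ↔
      ∀ a : Fin N, x a = x ⟨a.val % Nat.gcd N j, rot_fix_index_bound hN a.val⟩ := by
  set g := Nat.gcd N j with hgdef
  have hg : 0 < g := Nat.gcd_pos_of_pos_left _ hN
  constructor
  · intro h
    have h' : ∀ a : Fin N, x ⟨(a.val + j) % N, Nat.mod_lt _ hN⟩ = x a := fun a => congrFun h a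
    -- iterate
    have step1 : ∀ (t : ℕ) (a : Fin N), x ⟨(a.val + t * j) % N, Nat.mod_lt _ hN⟩ = x a := by
      intro t
      induction t with
      | zero => intro a; simp only [Nat.zero_mul, Nat.add_zero]
                have : (a.val) % N = a.val := Nat.mod_eq_of_lt a.isLt
                rw [show (⟨a.val % N, Nat.mod_lt _ hN⟩ : Fin N) = a from Fin.ext this]
      | succ t ih =>
        intro a
        have hidx : (a.val + (t + 1) * j) % N = ((a.val + t * j) % N + j) % N := by
          have : (a.val + t * j) % N + j ≡ a.val + t * j + j [MOD N] :=
            Nat.ModEq.add_right j (Nat.mod_modEq _ N)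
          calc (a.val + (t + 1) * j) % N = (a.val + t * j + j) % N := by ring_nf
            _ = ((a.val + t * j) % N + j) % N := this.symm
        rw [show (⟨(a.val + (t+1) * j) % N, Nat.mod_lt _ hN⟩ : Fin N)
              = ⟨((a.val + t * j) % N + j) % N, Nat.mod_lt _ hN⟩ from Fin.ext hidx]
        rw [h' ⟨(a.val + t * j) % N, Nat.mod_lt _ hN⟩]
        exact ih a
    obtain ⟨t, ht⟩ := exists_mul_modEq_gcd N j hN
    have hgstep : ∀ a : Fin N, x ⟨(a.val + g) % N, Nat.mod_lt _ hN⟩ = x a := by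
      intro a
      have : (a.val + t * j) % N = (a.val + g) % N := Nat.ModEq.add_left a.val ht
      rw [← show (⟨(a.val + t * j) % N, Nat.mod_lt _ hN⟩ : Fin N)
            = ⟨(a.val + g) % N, Nat.mod_lt _ hN⟩ from Fin.ext this]
      exact step1 t a
    suffices H : ∀ v (hv : v < N), x ⟨v, hv⟩ = x ⟨v % g, rot_fix_index_bound hN v⟩ by
      intro a; exact (Fin.mk_val a ▸ H a.val a.isLt : _)
    intro v
    induction v using Nat.strong_induction_on with
    | _ v ih =>
      intro hv
      by_cases hvg : v < g
      · have : v % g = v := Nat.mod_eq_of_lt hvg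
        congr 1
        exact (Fin.ext this.symm)
      · push_neg at hvg
        have hvg' : v - g < v := by omega
        have h1 := hgstep ⟨v - g, by omega⟩
        have hidx : (v - g + g) % N = v := by
          have : v - g + g = v := by omega
          rw [this, Nat.mod_eq_of_lt hv]
        rw [show (⟨(v - g + g) % N, Nat.mod_lt _ hN⟩ : Fin N) = ⟨v, hv⟩ from Fin.ext hidx] at h1
        rw [h1, ih (v - g) hvg' (by omega)]
        congr 1
        apply Fin.ext
        show (v - g) % g = v % g
        conv_rhs => rw [show v = v - g + g by omega]
        rw [Nat.add_mod_right]
  · intro hx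
    funext a
    show x ⟨(a.val + j) % N, _⟩ = x a
    rw [hx ⟨(a.val + j) % N, Nat.mod_lt _ hN⟩, hx a]
    congr 1
    apply Fin.ext
    show (a.val + j) % N % g = a.val % g
    rw [Nat.mod_mod_of_dvd _ (Nat.gcd_dvd_left N j)]
    show (a.val + j) % g = a.val % g
    obtain ⟨c, hc⟩ : g ∣ j := Nat.gcd_dvd_right N j
    rw [hc, Nat.add_mul_mod_self_left]

lemma card_rot_fixed (N j : ℕ) (hN : 0 < N) :
    Fintype.card {x : Fin N → Bool // bvRot N j x = x} = 2 ^ Nat.gcd N j := by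
  set g := Nat.gcd N j with hgdef
  have hg : 0 < g := Nat.gcd_pos_of_pos_left _ hN
  have hgN : g ≤ N := Nat.le_of_dvd hN (Nat.gcd_dvd_left N j)
  have e : {x : Fin N → Bool // bvRot N j x = x} ≃ (Fin g → Bool) := by
    refine ⟨fun x i => x.1 ⟨i.val, lt_of_lt_of_le i.isLt hgN⟩,
      fun y => ⟨fun a => y ⟨a.val % g, Nat.mod_lt _ hg⟩, ?_⟩, ?_, ?_⟩
    · rw [rot_fixed_iff j hN]
      intro a
      congr 1
      apply Fin.ext
      show a.val % g = a.val % g % g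
      rw [Nat.mod_mod_of_dvd _ dvd_rfl]
    · intro x
      apply Subtype.ext
      funext a
      exact ((rot_fixed_iff j hN x.1).mp x.2 a).symm
    · intro y
      funext i
      show y ⟨i.val % g, _⟩ = y i
      congr 1
      exact Fin.ext (Nat.mod_eq_of_lt i.isLt)
  rw [Fintype.card_congr e]
  simp

end RotFix

section ReflFix

/-- Number of vectors fixed by `bvRefl ∘ bvRot j`. -/
def reflFixCard (N j : ℕ) : ℕ :=
  Fintype.card {x : Fin N → Bool // bvRefl N (bvRot N j x) = x}

lemma reflFixCard_congr {N j j' : ℕ} (h : j ≡ j' [MOD N]) :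
    reflFixCard N j = reflFixCard N j' :=
  Fintype.card_congr (Equiv.subtypeEquivRight fun x => by rw [bvRot_congr h])

lemma card_refl_fixed_zero (N : ℕ) (hN : 0 < N) :
    reflFixCard N 0 = 2 ^ ((N + 1) / 2) := by
  have e : {x : Fin N → Bool // bvRefl N (bvRot N 0 x) = x} ≃ (Fin ((N + 1) / 2) → Bool) := by
    refine ⟨fun x i => x.1 ⟨i.val, by have := i.isLt; omega⟩,
      fun y => ⟨fun a => y ⟨min a.val (N - 1 - a.val), by have := a.isLt; omega⟩, ?_⟩, ?_, ?_⟩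
    · rw [bvRot_zero]
      funext a
      show y ⟨min (N - 1 - a.val) (N - 1 - (N - 1 - a.val)), _⟩ = y ⟨min a.val (N - 1 - a.val), _⟩
      congr 1
      apply Fin.ext
      show min (N - 1 - a.val) (N - 1 - (N - 1 - a.val)) = min a.val (N - 1 - a.val)
      have := a.isLt; omega
    · intro x
      apply Subtype.ext
      funext a
      have hx : x.1 ⟨N - 1 - a.val, by have := a.isLt; omega⟩ = x.1 a := by
        have h2 := congrFun x.2 a
        rwa [bvRot_zero] at h2
      show x.1 ⟨min a.val (N - 1 - a.val), _⟩ = x.1 a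
      rcases Nat.le_total a.val (N - 1 - a.val) with h | h
      · rw [show (⟨min a.val (N - 1 - a.val), _⟩ : Fin N) = a from Fin.ext (by simpa using h)]
      · rw [show (⟨min a.val (N - 1 - a.val), _⟩ : Fin N)
            = ⟨N - 1 - a.val, by have := a.isLt; omega⟩ from Fin.ext (by simpa using h)]
        exact hx
    · intro y
      funext i
      show y ⟨min i.val (N - 1 - i.val), _⟩ = y i
      congr 1
      apply Fin.ext
      show min i.val (N - 1 - i.val) = i.val
      have := i.isLt; omega
  rw [reflFixCard, Fintype.card_congr e]
  simp

lemma card_refl_fixed_one (N : ℕ) (hN : 0 < N) :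
    reflFixCard N 1 = 2 ^ (N / 2 + 1) := by
  have hb : ∀ a : Fin N, min a.val ((N - a.val) % N) < N / 2 + 1 := by
    intro a
    have h := a.isLt
    rcases Nat.eq_zero_or_pos a.val with h0 | h0
    · simp [h0, Nat.mod_self]
    · have h1 : (N - a.val) % N = N - a.val := Nat.mod_eq_of_lt (by omega)
      rw [h1]; omega
  have hidx : ∀ a : Fin N, (N - 1 - a.val + 1) % N = (N - a.val) % N := by
    intro a; have := a.isLt
    congr 1; omega
  have e : {x : Fin N → Bool // bvRefl N (bvRot N 1 x) = x} ≃ (Fin (N / 2 + 1) → Bool) := by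
    refine ⟨fun x i => x.1 ⟨i.val, by have := i.isLt; omega⟩,
      fun y => ⟨fun a => y ⟨min a.val ((N - a.val) % N), hb a⟩, ?_⟩, ?_, ?_⟩
    · funext a
      show y ⟨min ((N - 1 - a.val + 1) % N) ((N - (N - 1 - a.val + 1) % N) % N), _⟩
          = y ⟨min a.val ((N - a.val) % N), _⟩
      congr 1
      apply Fin.ext
      show min ((N - 1 - a.val + 1) % N) ((N - (N - 1 - a.val + 1) % N) % N)
          = min a.val ((N - a.val) % N)
      have ha := a.isLt
      rw [hidx a]
      rcases Nat.eq_zero_or_pos a.val with h0 | h0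
      · rw [h0]; simp [Nat.mod_self]
      · have h1 : (N - a.val) % N = N - a.val := Nat.mod_eq_of_lt (by omega)
        rw [h1]
        have h3 : (N - (N - a.val)) % N = a.val := by
          rw [show N - (N - a.val) = a.val by omega, Nat.mod_eq_of_lt ha]
        rw [h3]
        omega
    · intro x
      apply Subtype.ext
      funext a
      have hx : x.1 ⟨(N - a.val) % N, Nat.mod_lt _ hN⟩ = x.1 a := by
        have h2 := congrFun x.2 a
        have h3 : (⟨(N - 1 - a.val + 1) % N, Nat.mod_lt _ hN⟩ : Fin N)
            = ⟨(N - a.val) % N, Nat.mod_lt _ hN⟩ := Fin.ext (hidx a)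
        rw [← h3]
        exact h2
      show x.1 ⟨min a.val ((N - a.val) % N), _⟩ = x.1 a
      rcases Nat.le_total a.val ((N - a.val) % N) with h | h
      · rw [show (⟨min a.val ((N - a.val) % N), _⟩ : Fin N) = a from Fin.ext (by simpa using h)]
      · rw [show (⟨min a.val ((N - a.val) % N), _⟩ : Fin N)
            = ⟨(N - a.val) % N, Nat.mod_lt _ hN⟩ from Fin.ext (by simpa using h)]
        exact hx
    · intro y
      funext i
      show y ⟨min i.val ((N - i.val) % N), _⟩ = y i
      congr 1
      apply Fin.ext
      show min i.val ((N - i.val) % N) = i.val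
      have hi := i.isLt
      rcases Nat.eq_zero_or_pos i.val with h0 | h0
      · simp [h0, Nat.mod_self]
      · have h1 : (N - i.val) % N = N - i.val := Nat.mod_eq_of_lt (by omega)
        rw [h1]; omega
  rw [reflFixCard, Fintype.card_congr e]
  simp

lemma reflFixCard_add_two_mul (N j t : ℕ) (hN : 0 < N) :
    reflFixCard N (j + 2 * t) = reflFixCard N j := by
  set s := N - t % N with hsdef
  have hts : N ∣ t + s := by
    obtain ⟨q, hq⟩ : ∃ q, t = N * q + t % N := ⟨t / N, (Nat.div_add_mod t N).symm⟩
    have h1 : t % N < N := Nat.mod_lt _ hN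
    refine ⟨q + 1, ?_⟩
    have hmul : N * (q + 1) = N * q + N := by ring
    omega
  have hst : N ∣ s + t := by rwa [Nat.add_comm]
  have hrot_ts : ∀ x : Fin N → Bool, bvRot N s (bvRot N t x) = x := fun x => by
    rw [bvRot_bvRot, bvRot_of_dvd hst]
  have hrot_st : ∀ x : Fin N → Bool, bvRot N t (bvRot N s x) = x := fun x => by
    rw [bvRot_bvRot, bvRot_of_dvd hts]
  have hinj : Function.Injective (bvRot N t) := by
    intro u v h
    have := congrArg (bvRot N s) h
    rwa [hrot_ts, hrot_ts] at this
  have key1 : ∀ x : Fin N → Bool, bvRefl N (bvRot N (j + 2 * t) x) = x →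
      bvRefl N (bvRot N j (bvRot N t x)) = bvRot N t x := by
    intro x hx2
    have hx := congrArg (bvRot N t) hx2
    rw [show j + 2 * t = (j + t) + t by ring] at hx
    rw [bvRot_bvRefl_bvRot] at hx
    rw [bvRot_bvRot]
    exact hx
  have key2 : ∀ y : Fin N → Bool, bvRefl N (bvRot N j y) = y →
      bvRefl N (bvRot N (j + 2 * t) (bvRot N s y)) = bvRot N s y := by
    intro y hy
    apply hinj
    rw [hrot_st]
    rw [bvRot_bvRot, show j + 2 * t + s = (j + t + s) + t by ring, bvRot_bvRefl_bvRot]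
    rw [bvRot_congr (show j + t + s ≡ j [MOD N] by
      have h0 : t + s ≡ 0 [MOD N] := (Nat.modEq_zero_iff_dvd).2 hts
      calc j + t + s = j + (t + s) := by ring
        _ ≡ j + 0 [MOD N] := Nat.ModEq.add_left j h0
        _ = j := by ring)]
    exact hy
  have e : {x : Fin N → Bool // bvRefl N (bvRot N (j + 2 * t) x) = x}
      ≃ {x : Fin N → Bool // bvRefl N (bvRot N j x) = x} := by
    refine ⟨fun x => ⟨bvRot N t x.1, key1 x.1 x.2⟩, fun y => ⟨bvRot N s y.1, key2 y.1 y.2⟩, ?_, ?_⟩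
    · intro x
      apply Subtype.ext
      exact hrot_ts x.1
    · intro y
      apply Subtype.ext
      exact hrot_st y.1
  exact Fintype.card_congr e

lemma reflFixCard_of_even {N j : ℕ} (hN : 0 < N) (hj : Even j) :
    reflFixCard N j = 2 ^ ((N + 1) / 2) := by
  obtain ⟨c, hc⟩ := hj
  have := reflFixCard_add_two_mul N 0 c hN
  rw [Nat.zero_add] at this
  rw [show j = 2 * c by omega, this, card_refl_fixed_zero N hN]

lemma reflFixCard_of_odd {N j : ℕ} (hN : 0 < N) (hj : Odd j) :
    reflFixCard N j = 2 ^ (N / 2 + 1) := by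
  obtain ⟨c, hc⟩ := hj
  have := reflFixCard_add_two_mul N 1 c hN
  rw [show j = 1 + 2 * c by omega, this, card_refl_fixed_one N hN]

end ReflFix

section GcdSum

lemma card_gcd_fiber {m d : ℕ} (hm : 0 < m) (hd : d ∈ m.divisors) :
    ((Finset.range m).filter (fun i => Nat.gcd m i = d)).card = Nat.totient (m / d) := by
  have hdm : d ∣ m := (Nat.mem_divisors.mp hd).1
  have hdpos : 0 < d := Nat.pos_of_dvd_of_pos hdm hm
  rw [Nat.totient]
  apply Finset.card_bij' (fun a _ => a / d) (fun b _ => d * b)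
  · intro a ha
    rw [Finset.mem_filter, Finset.mem_range] at ha
    obtain ⟨ha1, ha2⟩ := ha
    have hda : d ∣ a := ha2 ▸ Nat.gcd_dvd_right m a
    rw [Finset.mem_filter, Finset.mem_range]
    constructor
    · exact Nat.div_lt_div_of_lt_of_dvd hdm ha1
    · have := Nat.coprime_div_gcd_div_gcd (m := m) (n := a) (ha2 ▸ hdpos)
      rwa [ha2] at this
  · intro b hb
    rw [Finset.mem_filter, Finset.mem_range] at hb
    obtain ⟨hb1, hb2⟩ := hb
    rw [Finset.mem_filter, Finset.mem_range]
    constructor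
    · have h1 : d * b < d * (m / d) := (Nat.mul_lt_mul_left hdpos).mpr hb1
      rwa [Nat.mul_div_cancel' hdm] at h1
    · conv_lhs => rw [show m = d * (m / d) from (Nat.mul_div_cancel' hdm).symm]
      rw [Nat.gcd_mul_left, Nat.Coprime.gcd_eq_one hb2, Nat.mul_one]
  · intro a ha
    rw [Finset.mem_filter] at ha
    exact Nat.mul_div_cancel' (ha.2 ▸ Nat.gcd_dvd_right m a)
  · intro b _
    exact Nat.mul_div_cancel_left b hdpos

lemma sum_F_gcd (m : ℕ) (hm : 0 < m) (F : ℕ → ℕ) :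
    ∑ i ∈ Finset.range m, F (Nat.gcd m i)
      = ∑ t ∈ m.divisors, t.totient * F (m / t) := by
  have hmap : ∀ i ∈ Finset.range m, Nat.gcd m i ∈ m.divisors := by
    intro i _
    exact Nat.mem_divisors.mpr ⟨Nat.gcd_dvd_left m i, hm.ne'⟩
  rw [← Finset.sum_fiberwise_of_maps_to hmap (fun i => F (Nat.gcd m i))]
  have step : ∀ d ∈ m.divisors,
      (∑ i ∈ (Finset.range m).filter (fun i => Nat.gcd m i = d), F (Nat.gcd m i))
        = (m / d).totient * F d := by
    intro d hd
    have hcg : (∑ i ∈ (Finset.range m).filter (fun i => Nat.gcd m i = d), F (Nat.gcd m i))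
        = ∑ _i ∈ (Finset.range m).filter (fun i => Nat.gcd m i = d), F d :=
      Finset.sum_congr rfl (fun i hi => by rw [(Finset.mem_filter.mp hi).2])
    rw [hcg, Finset.sum_const, card_gcd_fiber hm hd, smul_eq_mul]
  rw [Finset.sum_congr rfl step]
  -- now reindex d ↦ m / d
  have := Nat.sum_div_divisors m (fun t => t.totient * F (m / t))
  rw [← this]
  apply Finset.sum_congr rfl
  intro d hd
  rw [Nat.div_div_self (Nat.mem_divisors.mp hd).1 hm.ne']

end GcdSum

section MainCount

open MulAction

lemma mem_kDihOrbit_iff {k m : ℕ} [NeZero k] [NeZero m] (x y : BVkm k m) :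
    y ∈ kDihOrbit (k * m) k x ↔ y ∈ MulAction.orbit (DihedralGroup m) x := by
  have hk : 0 < k := Nat.pos_of_ne_zero (NeZero.ne k)
  have hdiv : k * m / k = m := Nat.mul_div_cancel_left m hk
  rw [MulAction.mem_orbit_iff]
  simp only [kDihOrbit, Finset.mem_union, Finset.mem_image, Finset.mem_univ, true_and]
  constructor
  · rintro (⟨i, rfl⟩ | ⟨i, rfl⟩)
    · refine ⟨DihedralGroup.r ((i.val : ℕ) : ZMod m), ?_⟩
      rw [BVkm.r_smul, ZMod.val_cast_of_lt (lt_of_lt_of_eq i.isLt hdiv)]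
    · refine ⟨DihedralGroup.sr ((i.val : ℕ) : ZMod m), ?_⟩
      rw [BVkm.sr_smul, ZMod.val_cast_of_lt (lt_of_lt_of_eq i.isLt hdiv)]
  · rintro ⟨g, rfl⟩
    rcases g with i | i
    · left
      exact ⟨⟨i.val, by rw [hdiv]; exact i.val_lt⟩, by rw [BVkm.r_smul]⟩
    · right
      exact ⟨⟨i.val, by rw [hdiv]; exact i.val_lt⟩, by rw [BVkm.sr_smul]⟩

lemma image_kDihOrbit_card {k m : ℕ} [NeZero k] [NeZero m] :
    (Finset.univ.image (kDihOrbit (k * m) k)).card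
      = Fintype.card (Quotient (MulAction.orbitRel (DihedralGroup m) (BVkm k m))) := by
  classical
  have hwd : ∀ a b : BVkm k m, (MulAction.orbitRel (DihedralGroup m) (BVkm k m)).r a b →
      kDihOrbit (k * m) k a = kDihOrbit (k * m) k b := by
    intro a b hab
    have horb : MulAction.orbit (DihedralGroup m) a = MulAction.orbit (DihedralGroup m) b :=
      MulAction.orbit_eq_iff.mpr hab
    ext y
    rw [mem_kDihOrbit_iff, mem_kDihOrbit_iff, horb]
  let ψ : Quotient (MulAction.orbitRel (DihedralGroup m) (BVkm k m))
      → Finset (Fin (k * m) → Bool) := Quotient.lift (kDihOrbit (k * m) k) hwd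
  have hinj : Function.Injective ψ := by
    intro q1 q2
    induction q1 using Quotient.inductionOn with | _ a =>
    induction q2 using Quotient.inductionOn with | _ b =>
      intro h
      apply Quotient.sound
      have ha : a ∈ kDihOrbit (k * m) k a :=
        (mem_kDihOrbit_iff a a).mpr (MulAction.mem_orbit_self _)
      have h' : kDihOrbit (k * m) k a = kDihOrbit (k * m) k b := h
      rw [h'] at ha
      exact (mem_kDihOrbit_iff b a).mp ha
  have himg : Finset.univ.image (kDihOrbit (k * m) k) = Finset.univ.image ψ := by
    ext s
    simp only [Finset.mem_image, Finset.mem_univ, true_and]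
    constructor
    · rintro ⟨x, rfl⟩; exact ⟨Quotient.mk _ x, rfl⟩
    · rintro ⟨q, rfl⟩
      induction q using Quotient.inductionOn with | _ a => exact ⟨a, rfl⟩
  rw [himg, Finset.card_image_of_injective _ hinj, Finset.card_univ]

lemma zmod_sum_val {m : ℕ} [NeZero m] (f : ℕ → ℕ) :
    ∑ i : ZMod m, f (ZMod.val i) = ∑ i ∈ Finset.range m, f i := by
  apply Finset.sum_nbij' (i := fun i => ZMod.val i) (j := fun a => (a : ZMod m))
  · intro a _
    exact Finset.mem_range.mpr a.val_lt
  · intro a _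
    exact Finset.mem_univ _
  · intro a _
    exact ZMod.natCast_rightInverse a
  · intro a ha
    exact ZMod.val_cast_of_lt (Finset.mem_range.mp ha)
  · intro a _
    rfl

lemma burnside_count {k m : ℕ} [NeZero k] [NeZero m] :
    Fintype.card (Quotient (MulAction.orbitRel (DihedralGroup m) (BVkm k m))) * (2 * m)
      = (∑ i ∈ Finset.range m, 2 ^ (k * Nat.gcd m i))
        + ∑ i ∈ Finset.range m, reflFixCard (k * m) (k * i) := by
  classical
  have hk : 0 < k := Nat.pos_of_ne_zero (NeZero.ne k)
  have hm : 0 < m := Nat.pos_of_ne_zero (NeZero.ne m)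
  have hN : 0 < k * m := Nat.mul_pos hk hm
  have hburn := MulAction.sum_card_fixedBy_eq_card_orbits_mul_card_group
    (DihedralGroup m) (BVkm k m)
  rw [DihedralGroup.card] at hburn
  rw [← hburn]
  -- split the sum over the group
  let e : ZMod m ⊕ ZMod m ≃ DihedralGroup m :=
    ⟨fun g => match g with | .inl i => .r i | .inr i => .sr i,
     fun g => match g with | .r i => .inl i | .sr i => .inr i,
     fun g => by rcases g with i | i <;> rfl,
     fun g => by rcases g with i | i <;> rfl⟩
  rw [← Fintype.sum_equiv e
    (fun p => Fintype.card (MulAction.fixedBy (BVkm k m) (e p)))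
    (fun g => Fintype.card (MulAction.fixedBy (BVkm k m) g)) (fun p => rfl)]
  rw [Fintype.sum_sum_type]
  have hr : ∀ i : ZMod m,
      Fintype.card (MulAction.fixedBy (BVkm k m) (DihedralGroup.r i))
        = 2 ^ (k * Nat.gcd m i.val) := by
    intro i
    have h1 := card_rot_fixed (k * m) (k * i.val) hN
    rw [Nat.gcd_mul_left] at h1
    rw [← h1]
    apply Fintype.card_congr
    apply Equiv.subtypeEquivRight
    intro x
    show DihedralGroup.r i • x = x ↔ _
    rw [BVkm.r_smul]
  have hsr : ∀ i : ZMod m,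
      Fintype.card (MulAction.fixedBy (BVkm k m) (DihedralGroup.sr i))
        = reflFixCard (k * m) (k * i.val) := by
    intro i
    rw [reflFixCard]
    apply Fintype.card_congr
    apply Equiv.subtypeEquivRight
    intro x
    show DihedralGroup.sr i • x = x ↔ _
    rw [BVkm.sr_smul]
  have e1 : ∑ i : ZMod m, Fintype.card (MulAction.fixedBy (BVkm k m) (e (Sum.inl i)))
      = ∑ i ∈ Finset.range m, 2 ^ (k * Nat.gcd m i) := by
    rw [show (fun i : ZMod m => Fintype.card (MulAction.fixedBy (BVkm k m) (e (Sum.inl i))))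
        = fun i : ZMod m => 2 ^ (k * Nat.gcd m i.val) from funext fun i => hr i]
    exact zmod_sum_val (fun v => 2 ^ (k * Nat.gcd m v))
  have e2 : ∑ i : ZMod m, Fintype.card (MulAction.fixedBy (BVkm k m) (e (Sum.inr i)))
      = ∑ i ∈ Finset.range m, reflFixCard (k * m) (k * i) := by
    rw [show (fun i : ZMod m => Fintype.card (MulAction.fixedBy (BVkm k m) (e (Sum.inr i))))
        = fun i : ZMod m => reflFixCard (k * m) (k * i.val) from funext fun i => hsr i]
    exact zmod_sum_val (fun v => reflFixCard (k * m) (k * v))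
  rw [e1, e2]

end MainCount

lemma sum_ite_even (A B c : ℕ) :
    ∑ i ∈ Finset.range (2 * c), (if Even i then A else B) = c * A + c * B := by
  induction c with
  | zero => simp
  | succ c ih =>
    rw [show 2 * (c + 1) = (2 * c) + 1 + 1 by ring, Finset.sum_range_succ,
      Finset.sum_range_succ, ih]
    have h1 : Even (2 * c) := even_two_mul c
    have h2 : ¬ Even (2 * c + 1) := by simp [Nat.even_add_one, h1]
    rw [if_neg h2, if_pos h1]
    ring

/-- for `k ∣ n`, the number of orbits of `D^k_n = {ρ^{ik}, τ∘ρ^{ik}}`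
acting on `{0,1}^n` equals `g_{n,k}/2 + l`, with `g_{n,k} = (k/n) Σ_{t ∣ (n/k)} φ(t) 2^{n/t}`
and `l` as in Corollary 1. -/
theorem k_dihedral_orbit_count (n k : ℕ) (hn : 0 < n) (hk : 0 < k) (hkn : k ∣ n) :
    ((Finset.univ.image (kDihOrbit n k)).card : ℚ)
      = ((k : ℚ) / n) * (∑ t ∈ (n / k).divisors, (t.totient : ℚ) * 2 ^ (n / t)) / 2
        + (if Even n then
            (if Even k then 2 ^ (n / 2 - 1) else (3 / 4) * 2 ^ (n / 2))
          else 2 ^ ((n - 1) / 2)) := by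
  obtain ⟨m, rfl⟩ := hkn
  have hm : 0 < m := by
    rcases Nat.eq_zero_or_pos m with h | h
    · subst h; simp at hn
    · exact h
  haveI : NeZero k := ⟨hk.ne'⟩
  haveI : NeZero m := ⟨hm.ne'⟩
  have hdiv : k * m / k = m := Nat.mul_div_cancel_left m hk
  rw [hdiv]
  have hN : 0 < k * m := hn
  set Srot := ∑ t ∈ m.divisors, t.totient * 2 ^ (k * m / t) with hSrot
  have hrot : ∑ i ∈ Finset.range m, 2 ^ (k * Nat.gcd m i) = Srot := by
    rw [hSrot, sum_F_gcd m hm (fun d => 2 ^ (k * d))]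
    apply Finset.sum_congr rfl
    intro t ht
    rw [Nat.mul_div_assoc k (Nat.mem_divisors.mp ht).1]
  have hSq : ((Srot : ℕ) : ℚ) = ∑ t ∈ m.divisors, (t.totient : ℚ) * 2 ^ (k * m / t) := by
    rw [hSrot]
    push_cast
    rfl
  have hburn := burnside_count (k := k) (m := m)
  rw [hrot] at hburn
  rw [← image_kDihOrbit_card (k := k) (m := m)] at hburn
  have hcap : ((Finset.univ.image (kDihOrbit (k * m) k)).card : ℚ)
      = ((Srot : ℚ) + ((∑ i ∈ Finset.range m, reflFixCard (k * m) (k * i) : ℕ) : ℚ))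
        / (2 * m) := by
    rw [eq_div_iff (by positivity)]
    exact_mod_cast congrArg (Nat.cast : ℕ → ℚ) hburn
  rw [hcap, hSq]
  have hkQ : (k : ℚ) ≠ 0 := Nat.cast_ne_zero.mpr hk.ne'
  have hmQ : (m : ℚ) ≠ 0 := Nat.cast_ne_zero.mpr hm.ne'
  rcases Nat.even_or_odd (k * m) with hne | hno
  · rw [if_pos hne]
    rcases Nat.even_or_odd k with hke | hko
    · rw [if_pos hke]
      have hT : ∑ i ∈ Finset.range m, reflFixCard (k * m) (k * i)
          = m * 2 ^ (k * m / 2 - 1 + 1) := by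
        have hexp : (k * m + 1) / 2 = k * m / 2 - 1 + 1 := by
          obtain ⟨w, hw⟩ := hne; omega
        rw [Finset.sum_congr rfl (fun i _ => by
          rw [reflFixCard_of_even hN (hke.mul_right i), hexp])]
        rw [Finset.sum_const, Finset.card_range, smul_eq_mul]
      rw [hT]
      push_cast
      rw [pow_succ]
      field_simp
    · rw [if_neg (by simpa using hko)]
      have hme : Even m := by
        rcases (Nat.even_mul.mp hne) with h | h
        · exact absurd h (by simpa using hko)
        · exact h
      obtain ⟨c, hc⟩ := hme
      have hm2 : m = 2 * c := by omega
      have hT : ∑ i ∈ Finset.range m, reflFixCard (k * m) (k * i)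
          = c * 2 ^ (k * m / 2) + c * 2 ^ (k * m / 2 + 1) := by
        have hexp : (k * m + 1) / 2 = k * m / 2 := by obtain ⟨w, hw⟩ := hne; omega
        have hcong : ∀ i ∈ Finset.range m, reflFixCard (k * m) (k * i)
            = if Even i then 2 ^ (k * m / 2) else 2 ^ (k * m / 2 + 1) := by
          intro i _
          rcases Nat.even_or_odd i with hie | hio
          · rw [if_pos hie, reflFixCard_of_even hN (hie.mul_left k), hexp]
          · rw [if_neg (by simpa using hio), reflFixCard_of_odd hN (hko.mul hio)]
        rw [Finset.sum_congr rfl hcong, hm2, sum_ite_even]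
      rw [hT]
      have hkk : ((k : ℚ)) / ((k : ℚ) * (m : ℚ)) = 1 / m := by field_simp
      push_cast
      rw [hkk]
      have hcQ : (c : ℚ) ≠ 0 := Nat.cast_ne_zero.mpr (by omega)
      rw [show ((m : ℚ)) = 2 * c by push_cast [hm2]; ring]
      rw [pow_succ]
      field_simp
      ring
  · rw [if_neg (by simpa using hno)]
    have hT : ∑ i ∈ Finset.range m, reflFixCard (k * m) (k * i)
        = m * 2 ^ ((k * m - 1) / 2 + 1) := by
      have hexp1 : (k * m + 1) / 2 = (k * m - 1) / 2 + 1 := by obtain ⟨w, hw⟩ := hno; omega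
      have hexp2 : k * m / 2 + 1 = (k * m - 1) / 2 + 1 := by obtain ⟨w, hw⟩ := hno; omega
      have hcong : ∀ i ∈ Finset.range m, reflFixCard (k * m) (k * i)
          = 2 ^ ((k * m - 1) / 2 + 1) := by
        intro i _
        rcases Nat.even_or_odd (k * i) with h | h
        · rw [reflFixCard_of_even hN h, hexp1]
        · rw [reflFixCard_of_odd hN h, hexp2]
      rw [Finset.sum_congr rfl hcong, Finset.sum_const, Finset.card_range, smul_eq_mul]
    rw [hT]
    push_cast
    rw [pow_succ]
    field_simp
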